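/- For every ε ∈ ℝ: (a) for j ∈ {1,2}, the pull-back of the Volterra lattice flow under the Miura map 𝐌_j(ε) : ℳ𝒱 → 𝒱 coincides with the modified Volterra lattice MVL(ε) (i.e. D𝐌_j(ε)(y,z)·F_{MVL(ε)}(y,z) = f_{VL}(𝐌_j(ε)(y,z)) for all (y,z)), and 𝐌_j(ε) is a Poisson map from ℳ𝒱 equipped with the bracket {·,·}_{23}^{ℳ𝒱} to 𝒱 equipped with the bracket {·,·}_2^𝒱 + ε{·,·}_3^𝒱; (b) for j ∈ {1,2}, the pull-back of the flow MTL(ε) under the Miura map M_j(ε) : ℳ𝒱 → ℳ𝒯 coincides with MVL(ε), and M_j(ε) is a Poisson map from (ℳ𝒱, {·,·}_{23}^{ℳ𝒱}) to (ℳ𝒯, {·,·}_{23}^{ℳ𝒯}). -/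

import Mathlib

open scoped BigOperators

/-- Index set for the periodic phase space `ℝ^{2N}`: `Sum.inl k` indexes the first
family of coordinates and `Sum.inr k` the second family, `k ∈ ℤ/Nℤ`. -/
abbrev Idx (N : ℕ) : Type := (ZMod N) ⊕ (ZMod N)

/-- The phase space `ℝ^{2N}`. -/
abbrev Phase (N : ℕ) : Type := Idx N → ℝ

/-- First family of coordinates. -/
def c1 {N : ℕ} (x : Phase N) (k : ZMod N) : ℝ := x (Sum.inl k)

/-- Second family of coordinates. -/
def c2 {N : ℕ} (x : Phase N) (k : ZMod N) : ℝ := x (Sum.inr k)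

/-- A structure matrix on `Phase N`. -/
abbrev SM (N : ℕ) : Type := Phase N → Idx N → Idx N → ℝ

/-- Partial derivative of `F` at `x` in the `i`-th coordinate direction. -/
noncomputable def pderiv {N : ℕ} [NeZero N] (i : Idx N) (F : Phase N → ℝ)
    (x : Phase N) : ℝ :=
  fderiv ℝ F x (Pi.single i 1)

/-- The bracket of two functions associated with a structure matrix `J`:
`{F,G}(x) = ∑_{i,j} ∂_i F(x) · J_{ij}(x) · ∂_j G(x)`. -/
noncomputable def bracket {N : ℕ} [NeZero N] (J : SM N) (F G : Phase N → ℝ)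
    (x : Phase N) : ℝ :=
  ∑ i : Idx N, ∑ j : Idx N, pderiv i F x * J x i j * pderiv j G x

/-- The Jacobi identity for `J` holds at every point satisfying `P`. -/
def JacobiOn {N : ℕ} [NeZero N] (J : SM N) (P : Phase N → Prop) : Prop :=
  ∀ F G H : Phase N → ℝ, ContDiff ℝ (⊤ : ℕ∞) F → ContDiff ℝ (⊤ : ℕ∞) G →
    ContDiff ℝ (⊤ : ℕ∞) H → ∀ x : Phase N, P x →
      bracket J (bracket J F G) H x + bracket J (bracket J G H) F x +
        bracket J (bracket J H F) G x = 0

/-- `J` defines a Poisson bracket: the Jacobi identity holds everywhere. -/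
def IsPoisson {N : ℕ} [NeZero N] (J : SM N) : Prop :=
  JacobiOn J fun _ => True

/-- `f(x) = J(x)∇H(x)`: the vector field `f` is Hamiltonian at `x` with respect
to the structure matrix `J`, with Hamilton function `H`. -/
def HamAt {N : ℕ} [NeZero N] (J : SM N) (f : Phase N → Phase N)
    (H : Phase N → ℝ) (x : Phase N) : Prop :=
  ∀ i : Idx N, f x i = ∑ j : Idx N, J x i j * pderiv j H x

/-- `Dφ(x)·J(x)·Dφ(x)ᵀ = J'(φ(x))`: `φ` is a Poisson map at `x` from the
structure matrix `J` to the structure matrix `J'`. -/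
def PoissonMapAt {N : ℕ} [NeZero N] (φ : Phase N → Phase N) (J J' : SM N)
    (x : Phase N) : Prop :=
  ∀ i j : Idx N,
    (∑ k : Idx N, ∑ l : Idx N,
      pderiv k (fun y => φ y i) x * J x k l * pderiv l (fun y => φ y j) x)
      = J' (φ x) i j

/-- `Dφ(x)·f(x) = g(φ(x))`: the vector field `f` is the pull-back of the vector
field `g` under `φ`, at the point `x`. -/
def PullbackAt {N : ℕ} [NeZero N] (φ : Phase N → Phase N)
    (f g : Phase N → Phase N) (x : Phase N) : Prop :=
  ∀ i : Idx N, (∑ k : Idx N, pderiv k (fun y => φ y i) x * f x k) = g (φ x) i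

/-- The modified Toda lattice vector field `MTL(ε)`:
`ṗ_k = (1 + εp_k)(q_k - q_{k-1})`, `q̇_k = q_k(p_{k+1} - p_k)`,
with coordinates `p_k = c1 x k`, `q_k = c2 x k`. -/
noncomputable def mtlF (ε : ℝ) {N : ℕ} (x : Phase N) : Phase N := fun i =>
  match i with
  | Sum.inl k => (1 + ε * c1 x k) * (c2 x k - c2 x (k - 1))
  | Sum.inr k => c2 x k * (c1 x (k + 1) - c1 x k)

/-- Structure matrix `J₂₃` on `ℳ𝒯`. -/
noncomputable def JMT23 (ε : ℝ) {N : ℕ} (x : Phase N) : Idx N → Idx N → ℝ := fun i₁ i₂ =>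
  match i₁, i₂ with
  | Sum.inl j, Sum.inr k =>
      if j = k then -(c2 x k * (c1 x k + ε * c2 x k) * (1 + ε * c1 x k))
      else if j = k + 1 then
        c2 x k * (c1 x (k + 1) + ε * c2 x k) * (1 + ε * c1 x (k + 1))
      else 0
  | Sum.inr k, Sum.inl j =>
      if j = k then c2 x k * (c1 x k + ε * c2 x k) * (1 + ε * c1 x k)
      else if j = k + 1 then
        -(c2 x k * (c1 x (k + 1) + ε * c2 x k) * (1 + ε * c1 x (k + 1)))
      else 0
  | Sum.inl j, Sum.inl l =>
      if l = j + 1 then -(c2 x j * (1 + ε * c1 x j) * (1 + ε * c1 x (j + 1)))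
      else if j = l + 1 then c2 x l * (1 + ε * c1 x l) * (1 + ε * c1 x (l + 1))
      else 0
  | Sum.inr j, Sum.inr l =>
      if l = j + 1 then -(c2 x j * c2 x (j + 1) * (1 + ε * c1 x (j + 1)))
      else if j = l + 1 then c2 x l * c2 x (l + 1) * (1 + ε * c1 x (l + 1))
      else 0

/-- The Volterra lattice vector field: `u̇_k = u_k(v_k - v_{k-1})`,
`v̇_k = v_k(u_{k+1} - u_k)`, with coordinates `u_k = c1 x k`, `v_k = c2 x k`. -/
noncomputable def vlF {N : ℕ} (x : Phase N) : Phase N := fun i =>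
  match i with
  | Sum.inl k => c1 x k * (c2 x k - c2 x (k - 1))
  | Sum.inr k => c2 x k * (c1 x (k + 1) - c1 x k)

/-- Quadratic Volterra structure matrix: `{u_k,v_k} = -u_k v_k`,
`{v_k,u_{k+1}} = -v_k u_{k+1}`. -/
noncomputable def JV2 {N : ℕ} (x : Phase N) : Idx N → Idx N → ℝ := fun i₁ i₂ =>
  match i₁, i₂ with
  | Sum.inl j, Sum.inr k =>
      if j = k then -(c1 x k * c2 x k)
      else if j = k + 1 then c2 x k * c1 x (k + 1) else 0
  | Sum.inr k, Sum.inl j =>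
      if j = k then c1 x k * c2 x k
      else if j = k + 1 then -(c2 x k * c1 x (k + 1)) else 0
  | _, _ => 0

/-- Cubic Volterra structure matrix. -/
noncomputable def JV3 {N : ℕ} (x : Phase N) : Idx N → Idx N → ℝ := fun i₁ i₂ =>
  match i₁, i₂ with
  | Sum.inl j, Sum.inr k =>
      if j = k then -(c1 x k * c2 x k * (c1 x k + c2 x k))
      else if j = k + 1 then c2 x k * c1 x (k + 1) * (c2 x k + c1 x (k + 1)) else 0
  | Sum.inr k, Sum.inl j =>
      if j = k then c1 x k * c2 x k * (c1 x k + c2 x k)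
      else if j = k + 1 then -(c2 x k * c1 x (k + 1) * (c2 x k + c1 x (k + 1))) else 0
  | Sum.inl j, Sum.inl l =>
      if l = j + 1 then -(c1 x j * c2 x j * c1 x (j + 1))
      else if j = l + 1 then c1 x l * c2 x l * c1 x (l + 1) else 0
  | Sum.inr j, Sum.inr l =>
      if l = j + 1 then -(c2 x j * c1 x (j + 1) * c2 x (j + 1))
      else if j = l + 1 then c2 x l * c1 x (l + 1) * c2 x (l + 1) else 0

/-- The modified Volterra lattice vector field `MVL(ε)`:
`ẏ_k = y_k(1+εy_k)(z_k - z_{k-1})`, `ż_k = z_k(1+εz_k)(y_{k+1} - y_k)`,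
with coordinates `y_k = c1 x k`, `z_k = c2 x k`. -/
noncomputable def mvlF (ε : ℝ) {N : ℕ} (x : Phase N) : Phase N := fun i =>
  match i with
  | Sum.inl k => c1 x k * (1 + ε * c1 x k) * (c2 x k - c2 x (k - 1))
  | Sum.inr k => c2 x k * (1 + ε * c2 x k) * (c1 x (k + 1) - c1 x k)

/-- Structure matrix `J₂₃` on `ℳ𝒱`: `{y_k,z_k} = -y_k z_k(1+εy_k)(1+εz_k)`,
`{z_k,y_{k+1}} = -z_k y_{k+1}(1+εz_k)(1+εy_{k+1})`. -/
noncomputable def JMV23 (ε : ℝ) {N : ℕ} (x : Phase N) : Idx N → Idx N → ℝ := fun i₁ i₂ =>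
  match i₁, i₂ with
  | Sum.inl j, Sum.inr k =>
      if j = k then -(c1 x k * c2 x k * (1 + ε * c1 x k) * (1 + ε * c2 x k))
      else if j = k + 1 then
        c2 x k * c1 x (k + 1) * (1 + ε * c2 x k) * (1 + ε * c1 x (k + 1))
      else 0
  | Sum.inr k, Sum.inl j =>
      if j = k then c1 x k * c2 x k * (1 + ε * c1 x k) * (1 + ε * c2 x k)
      else if j = k + 1 then
        -(c2 x k * c1 x (k + 1) * (1 + ε * c2 x k) * (1 + ε * c1 x (k + 1)))
      else 0
  | _, _ => 0

/-- Miura map `𝐌₁(ε) : ℳ𝒱 → 𝒱`: `u_k = y_k(1+εz_{k-1})`, `v_k = z_k(1+εy_k)`. -/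
noncomputable def bMV1 (ε : ℝ) {N : ℕ} (x : Phase N) : Phase N := fun i =>
  match i with
  | Sum.inl k => c1 x k * (1 + ε * c2 x (k - 1))
  | Sum.inr k => c2 x k * (1 + ε * c1 x k)

/-- Miura map `𝐌₂(ε) : ℳ𝒱 → 𝒱`: `u_k = y_k(1+εz_k)`, `v_k = z_k(1+εy_{k+1})`. -/
noncomputable def bMV2 (ε : ℝ) {N : ℕ} (x : Phase N) : Phase N := fun i =>
  match i with
  | Sum.inl k => c1 x k * (1 + ε * c2 x k)
  | Sum.inr k => c2 x k * (1 + ε * c1 x (k + 1))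

/-- Miura map `M₁(ε) : ℳ𝒱 → ℳ𝒯`: `p_k = y_k + z_{k-1} + εy_k z_{k-1}`, `q_k = y_k z_k`. -/
noncomputable def mMV1 (ε : ℝ) {N : ℕ} (x : Phase N) : Phase N := fun i =>
  match i with
  | Sum.inl k => c1 x k + c2 x (k - 1) + ε * c1 x k * c2 x (k - 1)
  | Sum.inr k => c1 x k * c2 x k

/-- Miura map `M₂(ε) : ℳ𝒱 → ℳ𝒯`: `p_k = y_k + z_k + εy_k z_k`, `q_k = y_{k+1} z_k`. -/
noncomputable def mMV2 (ε : ℝ) {N : ℕ} (x : Phase N) : Phase N := fun i =>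
  match i with
  | Sum.inl k => c1 x k + c2 x k + ε * c1 x k * c2 x k
  | Sum.inr k => c1 x (k + 1) * c2 x k


section Aux

variable {N : ℕ} [NeZero N]

lemma hasFDeriv_coord (a : Idx N) (x : Phase N) :
    HasFDerivAt (fun y : Phase N => y a)
      (ContinuousLinearMap.proj (R := ℝ) (φ := fun _ : Idx N => ℝ) a) x :=
  (ContinuousLinearMap.proj (R := ℝ) (φ := fun _ : Idx N => ℝ) a).hasFDerivAt

lemma pd_quad (β γ δ : ℝ) (a b : Idx N) (i : Idx N) (x : Phase N) :
    pderiv i (fun y : Phase N => β * y a + γ * y b + δ * (y a * y b)) x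
    = (if i = a then β + δ * x b else 0) + (if i = b then γ + δ * x a else 0) := by
  have ha := hasFDeriv_coord a x
  have hb := hasFDeriv_coord b x
  have h : HasFDerivAt (fun y : Phase N => β * y a + γ * y b + δ * (y a * y b)) _ x :=
    ((ha.const_mul β).add (hb.const_mul γ)).add ((ha.mul hb).const_mul δ)
  rw [pderiv, h.fderiv]
  simp only [ContinuousLinearMap.add_apply, ContinuousLinearMap.smul_apply,
    ContinuousLinearMap.proj_apply, Pi.single_apply, smul_eq_mul]
  by_cases h1 : i = a <;> by_cases h2 : i = b
  · subst h1; subst h2; simp; ring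
  · have hab : ¬ a = b := fun h => h2 (h1.trans h)
    have hba : ¬ b = a := fun h => hab h.symm
    simp [h1, h2, hab, hba] <;> ring
  · have hab : ¬ a = b := fun h => h1 (h2.trans h.symm)
    have hba : ¬ b = a := fun h => hab h.symm
    simp [h1, h2, hab, hba] <;> ring
  · have hai : ¬ a = i := fun h => h1 h.symm
    have hbi : ¬ b = i := fun h => h2 h.symm
    simp [h1, h2, hai, hbi]

lemma pd_of_eq {F : Phase N → ℝ} (β γ δ : ℝ) (a b : Idx N)
    (hF : ∀ y, F y = β * y a + γ * y b + δ * (y a * y b)) (i : Idx N) (x : Phase N) :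
    pderiv i F x
    = (if i = a then β + δ * x b else 0) + (if i = b then γ + δ * x a else 0) := by
  have : F = fun y : Phase N => β * y a + γ * y b + δ * (y a * y b) := funext hF
  rw [this, pd_quad]

lemma pd_bMV1_l (ε : ℝ) (k : ZMod N) (i : Idx N) (x : Phase N) :
    pderiv i (fun y => bMV1 ε y (Sum.inl k)) x
    = (if i = Sum.inl k then 1 + ε * x (Sum.inr (k-1)) else 0)
      + (if i = Sum.inr (k-1) then ε * x (Sum.inl k) else 0) := by
  rw [pd_of_eq 1 0 ε (Sum.inl k) (Sum.inr (k-1))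
    (fun y => by simp [bMV1, c1, c2]; ring)]
  simp

lemma pd_bMV1_r (ε : ℝ) (k : ZMod N) (i : Idx N) (x : Phase N) :
    pderiv i (fun y => bMV1 ε y (Sum.inr k)) x
    = (if i = Sum.inl k then ε * x (Sum.inr k) else 0)
      + (if i = Sum.inr k then 1 + ε * x (Sum.inl k) else 0) := by
  rw [pd_of_eq 0 1 ε (Sum.inl k) (Sum.inr k)
    (fun y => by simp [bMV1, c1, c2]; ring)]
  simp [mul_comm]

lemma pd_bMV2_l (ε : ℝ) (k : ZMod N) (i : Idx N) (x : Phase N) :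
    pderiv i (fun y => bMV2 ε y (Sum.inl k)) x
    = (if i = Sum.inl k then 1 + ε * x (Sum.inr k) else 0)
      + (if i = Sum.inr k then ε * x (Sum.inl k) else 0) := by
  rw [pd_of_eq 1 0 ε (Sum.inl k) (Sum.inr k)
    (fun y => by simp [bMV2, c1, c2]; ring)]
  simp

lemma pd_bMV2_r (ε : ℝ) (k : ZMod N) (i : Idx N) (x : Phase N) :
    pderiv i (fun y => bMV2 ε y (Sum.inr k)) x
    = (if i = Sum.inl (k+1) then ε * x (Sum.inr k) else 0)
      + (if i = Sum.inr k then 1 + ε * x (Sum.inl (k+1)) else 0) := by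
  rw [pd_of_eq 0 1 ε (Sum.inl (k+1)) (Sum.inr k)
    (fun y => by simp [bMV2, c1, c2]; ring)]
  simp [mul_comm]

lemma pd_mMV1_l (ε : ℝ) (k : ZMod N) (i : Idx N) (x : Phase N) :
    pderiv i (fun y => mMV1 ε y (Sum.inl k)) x
    = (if i = Sum.inl k then 1 + ε * x (Sum.inr (k-1)) else 0)
      + (if i = Sum.inr (k-1) then 1 + ε * x (Sum.inl k) else 0) := by
  rw [pd_of_eq 1 1 ε (Sum.inl k) (Sum.inr (k-1))
    (fun y => by simp [mMV1, c1, c2]; ring)]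

lemma pd_mMV1_r (ε : ℝ) (k : ZMod N) (i : Idx N) (x : Phase N) :
    pderiv i (fun y => mMV1 ε y (Sum.inr k)) x
    = (if i = Sum.inl k then x (Sum.inr k) else 0)
      + (if i = Sum.inr k then x (Sum.inl k) else 0) := by
  rw [pd_of_eq 0 0 1 (Sum.inl k) (Sum.inr k)
    (fun y => by simp [mMV1, c1, c2])]
  simp

lemma pd_mMV2_l (ε : ℝ) (k : ZMod N) (i : Idx N) (x : Phase N) :
    pderiv i (fun y => mMV2 ε y (Sum.inl k)) x
    = (if i = Sum.inl k then 1 + ε * x (Sum.inr k) else 0)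
      + (if i = Sum.inr k then 1 + ε * x (Sum.inl k) else 0) := by
  rw [pd_of_eq 1 1 ε (Sum.inl k) (Sum.inr k)
    (fun y => by simp [mMV2, c1, c2]; ring)]

lemma pd_mMV2_r (ε : ℝ) (k : ZMod N) (i : Idx N) (x : Phase N) :
    pderiv i (fun y => mMV2 ε y (Sum.inr k)) x
    = (if i = Sum.inl (k+1) then x (Sum.inr k) else 0)
      + (if i = Sum.inr k then x (Sum.inl (k+1)) else 0) := by
  rw [pd_of_eq 0 0 1 (Sum.inl (k+1)) (Sum.inr k)
    (fun y => by simp [mMV2, c1, c2])]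
  simp


lemma ite2_split {α : Type*} [DecidableEq α] (c d : α) (hcd : c ≠ d) (A B : ℝ) (j : α) :
    (if j = c then A else if j = d then B else 0)
    = (if j = c then A else 0) + (if j = d then B else 0) := by
  by_cases h1 : j = c <;> by_cases h2 : j = d <;>
    simp [h1, h2, hcd, hcd.symm]

lemma collapse1 (h1 : (1:ZMod N) ≠ 0) (A B : ZMod N → ℝ) (k : ZMod N) :
    ∑ j : ZMod N, (if j = k then A j else if j = k + 1 then B j else 0)
    = A k + B (k + 1) := by
  have hne : k ≠ k + 1 := fun h => h1 (left_eq_add.mp h)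
  rw [Finset.sum_congr rfl (fun j _ => ite2_split k (k+1) hne (A j) (B j) j)]
  rw [Finset.sum_add_distrib, Finset.sum_ite_eq', Finset.sum_ite_eq']
  simp

lemma collapse2 (h1 : (1:ZMod N) ≠ 0) (A B : ZMod N → ℝ) (j : ZMod N) :
    ∑ k : ZMod N, (if j = k then A k else if j = k + 1 then B k else 0)
    = A j + B (j - 1) := by
  have key : ∀ k : ZMod N, (if j = k then A k else if j = k + 1 then B k else 0)
      = (if k = j then A k else 0) + (if k = j - 1 then B k else 0) := by
    intro k
    have e1 : (j = k) = (k = j) := by simp [eq_comm]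
    have e2 : (j = k + 1) = (k = j - 1) := by
      have : j = k + 1 ↔ k = j - 1 := by
        rw [eq_sub_iff_add_eq, eq_comm]
      simp [this]
    simp only [e1, e2]
    apply ite2_split
    intro h
    rw [eq_comm, sub_eq_self] at h
    exact h1 h
  rw [Finset.sum_congr rfl (fun k _ => key k), Finset.sum_add_distrib,
    Finset.sum_ite_eq', Finset.sum_ite_eq']
  simp

/-- weight `w ε x m = y_m z_m (1+ε y_m)(1+ε z_m)` -/
noncomputable def wA (ε : ℝ) {N : ℕ} (x : Phase N) (m : ZMod N) : ℝ :=
  x (Sum.inl m) * x (Sum.inr m) * (1 + ε * x (Sum.inl m)) * (1 + ε * x (Sum.inr m))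

/-- weight `w' ε x m = z_m y_{m+1} (1+ε z_m)(1+ε y_{m+1})` -/
noncomputable def wB (ε : ℝ) {N : ℕ} (x : Phase N) (m : ZMod N) : ℝ :=
  x (Sum.inr m) * x (Sum.inl (m+1)) * (1 + ε * x (Sum.inr m)) * (1 + ε * x (Sum.inl (m+1)))

lemma Jred (ε : ℝ) (h1 : (1:ZMod N) ≠ 0) (x : Phase N) (P Q : Idx N → ℝ) :
    (∑ k : Idx N, ∑ l : Idx N, P k * JMV23 ε x k l * Q l)
    = (∑ m : ZMod N, wA ε x m * (P (Sum.inr m) * Q (Sum.inl m)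
        - P (Sum.inl m) * Q (Sum.inr m)))
    + (∑ m : ZMod N, wB ε x m * (P (Sum.inl (m+1)) * Q (Sum.inr m)
        - P (Sum.inr m) * Q (Sum.inl (m+1)))) := by
  rw [Fintype.sum_sum_type]
  have hinner : ∀ i : Idx N, (∑ l : Idx N, P i * JMV23 ε x i l * Q l)
      = ∑ m : ZMod N, P i * JMV23 ε x i (Sum.inl m) * Q (Sum.inl m)
      + ∑ m : ZMod N, P i * JMV23 ε x i (Sum.inr m) * Q (Sum.inr m) := by
    intro i; rw [Fintype.sum_sum_type]
  simp only [hinner]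
  rw [Finset.sum_add_distrib, Finset.sum_add_distrib]
  have Tll : (∑ j : ZMod N, ∑ m : ZMod N,
      P (Sum.inl j) * JMV23 ε x (Sum.inl j) (Sum.inl m) * Q (Sum.inl m)) = 0 := by
    apply Finset.sum_eq_zero; intro j _
    apply Finset.sum_eq_zero; intro m _
    simp [JMV23]
  have Trr : (∑ j : ZMod N, ∑ m : ZMod N,
      P (Sum.inr j) * JMV23 ε x (Sum.inr j) (Sum.inr m) * Q (Sum.inr m)) = 0 := by
    apply Finset.sum_eq_zero; intro j _
    apply Finset.sum_eq_zero; intro m _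
    simp [JMV23]
  have Tlr : (∑ j : ZMod N, ∑ m : ZMod N,
      P (Sum.inl j) * JMV23 ε x (Sum.inl j) (Sum.inr m) * Q (Sum.inr m))
      = ∑ j : ZMod N, (-(wA ε x j) * (P (Sum.inl j) * Q (Sum.inr j))
        + wB ε x (j-1) * (P (Sum.inl j) * Q (Sum.inr (j-1)))) := by
    apply Finset.sum_congr rfl; intro j _
    have : ∀ m : ZMod N, P (Sum.inl j) * JMV23 ε x (Sum.inl j) (Sum.inr m) * Q (Sum.inr m)
        = (if j = m then (-(wA ε x m)) * (P (Sum.inl j) * Q (Sum.inr m))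
           else if j = m + 1 then wB ε x m * (P (Sum.inl j) * Q (Sum.inr m)) else 0) := by
      intro m
      simp only [JMV23, wA, wB, c1, c2]
      split_ifs <;> ring
    rw [Finset.sum_congr rfl (fun m _ => this m), collapse2 h1]
  have Trl : (∑ j : ZMod N, ∑ m : ZMod N,
      P (Sum.inr j) * JMV23 ε x (Sum.inr j) (Sum.inl m) * Q (Sum.inl m))
      = ∑ j : ZMod N, (wA ε x j * (P (Sum.inr j) * Q (Sum.inl j))
        + (-(wB ε x j)) * (P (Sum.inr j) * Q (Sum.inl (j+1)))) := by
    apply Finset.sum_congr rfl; intro j _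
    have : ∀ m : ZMod N, P (Sum.inr j) * JMV23 ε x (Sum.inr j) (Sum.inl m) * Q (Sum.inl m)
        = (if m = j then wA ε x j * (P (Sum.inr j) * Q (Sum.inl m))
           else if m = j + 1 then (-(wB ε x j)) * (P (Sum.inr j) * Q (Sum.inl m)) else 0) := by
      intro m
      simp only [JMV23, wA, wB, c1, c2]
      split_ifs <;> ring
    rw [Finset.sum_congr rfl (fun m _ => this m), collapse1 h1]
  rw [Tll, Trr, Tlr, Trl]
  have hsh : (∑ j : ZMod N, wB ε x (j-1) * (P (Sum.inl j) * Q (Sum.inr (j-1))))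
      = ∑ m : ZMod N, wB ε x m * (P (Sum.inl (m+1)) * Q (Sum.inr m)) := by
    apply Finset.sum_nbij' (fun j => j - 1) (fun m => m + 1) <;>
      simp [sub_add_cancel, add_sub_cancel_right]
  rw [zero_add, add_zero, Finset.sum_add_distrib, hsh, ← Finset.sum_add_distrib,
    ← Finset.sum_add_distrib, ← Finset.sum_add_distrib]
  apply Finset.sum_congr rfl; intro m _
  ring


lemma pb_bMV1 (ε : ℝ) (x : Phase N) : PullbackAt (bMV1 ε) (mvlF ε) vlF x := by
  intro i
  rcases i with a | a <;>
  · rw [Fintype.sum_sum_type]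
    simp only [pd_bMV1_l, pd_bMV1_r]
    simp [add_mul, ite_mul, zero_mul,
      Finset.sum_add_distrib, Finset.sum_ite_eq', mvlF, vlF, bMV1, c1, c2,
      sub_add_cancel]
    ring


lemma pb_bMV2 (ε : ℝ) (x : Phase N) : PullbackAt (bMV2 ε) (mvlF ε) vlF x := by
  intro i
  rcases i with a | a <;>
  · rw [Fintype.sum_sum_type]
    simp only [pd_bMV2_l, pd_bMV2_r]
    simp [add_mul, ite_mul, zero_mul,
      Finset.sum_add_distrib, Finset.sum_ite_eq', mvlF, vlF, bMV2, c1, c2,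
      sub_add_cancel, add_sub_cancel_right]
    ring

lemma pb_mMV1 (ε : ℝ) (x : Phase N) : PullbackAt (mMV1 ε) (mvlF ε) (mtlF ε) x := by
  intro i
  rcases i with a | a <;>
  · rw [Fintype.sum_sum_type]
    simp only [pd_mMV1_l, pd_mMV1_r]
    simp [add_mul, ite_mul, zero_mul,
      Finset.sum_add_distrib, Finset.sum_ite_eq', mvlF, mtlF, mMV1, c1, c2,
      sub_add_cancel, add_sub_cancel_right]
    ring

lemma pb_mMV2 (ε : ℝ) (x : Phase N) : PullbackAt (mMV2 ε) (mvlF ε) (mtlF ε) x := by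
  intro i
  rcases i with a | a <;>
  · rw [Fintype.sum_sum_type]
    simp only [pd_mMV2_l, pd_mMV2_r]
    simp [add_mul, ite_mul, zero_mul,
      Finset.sum_add_distrib, Finset.sum_ite_eq', mvlF, mtlF, mMV2, c1, c2,
      sub_add_cancel, add_sub_cancel_right]
    ring



lemma ite_idx_l1 (m k k' : ZMod N) (A B : ℝ) :
    ((if (Sum.inl (m+1) : Idx N) = Sum.inl k then A else 0)
      + (if (Sum.inl (m+1) : Idx N) = Sum.inr k' then B else 0))
    = if m = k - 1 then A else 0 := by
  have : ((Sum.inl (m+1) : Idx N) = Sum.inl k) = (m = k - 1) := by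
    simp [Sum.inl.injEq, eq_sub_iff_add_eq]
  simp only [this]
  simp

lemma ite_idx_l (m k k' : ZMod N) (A B : ℝ) :
    ((if (Sum.inl m : Idx N) = Sum.inl k then A else 0)
      + (if (Sum.inl m : Idx N) = Sum.inr k' then B else 0))
    = if m = k then A else 0 := by simp

lemma ite_idx_r (m k k' : ZMod N) (A B : ℝ) :
    ((if (Sum.inr m : Idx N) = Sum.inl k then A else 0)
      + (if (Sum.inr m : Idx N) = Sum.inr k' then B else 0))
    = if m = k' then B else 0 := by simp

lemma sum_WPQ (W : ZMod N → ℝ) (c d : ZMod N) (A B : ℝ) :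
    (∑ m : ZMod N, W m * ((if m = c then A else 0) * (if m = d then B else 0)))
    = if c = d then W c * (A * B) else 0 := by
  have key : ∀ m : ZMod N, W m * ((if m = c then A else 0) * (if m = d then B else 0))
      = if m = c then (if c = d then W c * (A * B) else 0) else 0 := by
    intro m
    by_cases h : m = c <;> by_cases h' : m = d <;> subst_vars <;> simp_all <;>
      first
      | ring
      | (intro hcd; exact absurd hcd.symm h')
      | (intro hcd; exact absurd hcd h')
  rw [Finset.sum_congr rfl (fun m _ => key m), Finset.sum_ite_eq']
  simp


lemma zc12 (h1 : (1:ZMod N) ≠ 0) {a b : ZMod N} (e : a = b) (e' : a = b + 1) :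
    False := h1 (left_eq_add.mp (e ▸ e'))

lemma zc13 (h1 : (1:ZMod N) ≠ 0) {a b : ZMod N} (e : a = b) (e' : b = a + 1) :
    False := h1 (left_eq_add.mp (e ▸ e'))

lemma zc23 (h2 : (2:ZMod N) ≠ 0) {a b : ZMod N} (e : a = b + 1) (e' : b = a + 1) :
    False := by
  rw [e'] at e
  rw [add_assoc, one_add_one_eq_two] at e
  exact h2 (left_eq_add.mp e)

set_option maxHeartbeats 1000000 in
lemma pm_bMV1 (ε : ℝ) (h1 : (1:ZMod N) ≠ 0) (h2 : (2:ZMod N) ≠ 0) (x : Phase N) :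
    PoissonMapAt (bMV1 ε) (JMV23 ε)
      (fun y i j => JV2 y i j + ε * JV3 y i j) x := by
  intro i j
  rw [Jred ε h1]
  rcases i with a | a <;> rcases j with b | b <;>
  · simp only [pd_bMV1_l, pd_bMV1_r]
    simp only [ite_idx_l1]
    simp only [ite_idx_l, ite_idx_r]
    simp only [mul_sub, Finset.sum_sub_distrib, sum_WPQ]
    by_cases e1 : a = b <;> by_cases e2 : a = b + 1 <;> by_cases e3 : b = a + 1 <;>
      first
        | exact (zc12 h1 e1 e2).elim
        | exact (zc13 h1 e1 e3).elim
        | exact (zc23 h2 e2 e3).elim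
        | (simp [sub_eq_iff_eq_add, eq_sub_iff_add_eq, sub_left_inj,
            (show (a + 1 = b) ↔ (b = a + 1) from eq_comm),
            (show (b + 1 = a) ↔ (a = b + 1) from eq_comm),
            (show (b = a) ↔ (a = b) from eq_comm),
            e1, e2, e3, h1, h2, JV2, JV3, bMV1, wA, wB, c1, c2,
            left_eq_add, add_eq_left, right_eq_add,
            add_eq_right,
            add_sub_cancel_right, sub_add_cancel,
            (show ∀ c : ZMod N, ¬(c = 2 + c) from
              fun c hc => h2 (right_eq_add.mp hc)),
            (show ∀ c : ZMod N, ¬(2 + c = c) from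
              fun c hc => h2 (add_eq_right.mp hc)),
            (show ∀ c : ZMod N, ¬(c = c + 1 + 1) from fun c hc => h2 (by
              rwa [add_assoc, one_add_one_eq_two, left_eq_add] at hc)),
            (show ∀ c : ZMod N, ¬(c + 1 + 1 = c) from fun c hc => h2 (by
              rwa [add_assoc, one_add_one_eq_two, add_eq_left] at hc))])
    all_goals try exact Or.inl (by ring)
    all_goals try ring


set_option maxHeartbeats 1000000 in
lemma pm_bMV2 (ε : ℝ) (h1 : (1:ZMod N) ≠ 0) (h2 : (2:ZMod N) ≠ 0) (x : Phase N) :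
    PoissonMapAt (bMV2 ε) (JMV23 ε)
      (fun y i j => JV2 y i j + ε * JV3 y i j) x := by
  intro i j
  rw [Jred ε h1]
  rcases i with a | a <;> rcases j with b | b <;>
  · simp only [pd_bMV2_l, pd_bMV2_r]
    simp only [ite_idx_l1]
    simp only [ite_idx_l, ite_idx_r]
    simp only [mul_sub, Finset.sum_sub_distrib, sum_WPQ]
    by_cases e1 : a = b <;> by_cases e2 : a = b + 1 <;> by_cases e3 : b = a + 1 <;>
      first
        | exact (zc12 h1 e1 e2).elim
        | exact (zc13 h1 e1 e3).elim
        | exact (zc23 h2 e2 e3).elim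
        | (simp [sub_eq_iff_eq_add, eq_sub_iff_add_eq, sub_left_inj,
            (show (a + 1 = b) ↔ (b = a + 1) from eq_comm),
            (show (b + 1 = a) ↔ (a = b + 1) from eq_comm),
            (show (b = a) ↔ (a = b) from eq_comm),
            e1, e2, e3, h1, h2, JV2, JV3, bMV2, wA, wB, c1, c2,
            left_eq_add, add_eq_left, right_eq_add,
            add_eq_right,
            add_sub_cancel_right, sub_add_cancel,
            (show ∀ c : ZMod N, ¬(c = 2 + c) from
              fun c hc => h2 (right_eq_add.mp hc)),
            (show ∀ c : ZMod N, ¬(2 + c = c) from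
              fun c hc => h2 (add_eq_right.mp hc)),
            (show ∀ c : ZMod N, ¬(c = c + 1 + 1) from fun c hc => h2 (by
              rwa [add_assoc, one_add_one_eq_two, left_eq_add] at hc)),
            (show ∀ c : ZMod N, ¬(c + 1 + 1 = c) from fun c hc => h2 (by
              rwa [add_assoc, one_add_one_eq_two, add_eq_left] at hc))])
    all_goals try exact Or.inl (by ring)
    all_goals try ring


set_option maxHeartbeats 1000000 in
lemma pm_mMV1 (ε : ℝ) (h1 : (1:ZMod N) ≠ 0) (h2 : (2:ZMod N) ≠ 0) (x : Phase N) :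
    PoissonMapAt (mMV1 ε) (JMV23 ε) (JMT23 ε) x := by
  intro i j
  rw [Jred ε h1]
  rcases i with a | a <;> rcases j with b | b <;>
  · simp only [pd_mMV1_l, pd_mMV1_r]
    simp only [ite_idx_l1]
    simp only [ite_idx_l, ite_idx_r]
    simp only [mul_sub, Finset.sum_sub_distrib, sum_WPQ]
    by_cases e1 : a = b <;> by_cases e2 : a = b + 1 <;> by_cases e3 : b = a + 1 <;>
      first
        | exact (zc12 h1 e1 e2).elim
        | exact (zc13 h1 e1 e3).elim
        | exact (zc23 h2 e2 e3).elim
        | (simp [sub_eq_iff_eq_add, eq_sub_iff_add_eq, sub_left_inj,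
            (show (a + 1 = b) ↔ (b = a + 1) from eq_comm),
            (show (b + 1 = a) ↔ (a = b + 1) from eq_comm),
            (show (b = a) ↔ (a = b) from eq_comm),
            e1, e2, e3, h1, h2, JMT23, mMV1, wA, wB, c1, c2,
            left_eq_add, add_eq_left, right_eq_add,
            add_eq_right,
            add_sub_cancel_right, sub_add_cancel,
            (show ∀ c : ZMod N, ¬(c = 2 + c) from
              fun c hc => h2 (right_eq_add.mp hc)),
            (show ∀ c : ZMod N, ¬(2 + c = c) from
              fun c hc => h2 (add_eq_right.mp hc)),
            (show ∀ c : ZMod N, ¬(c = c + 1 + 1) from fun c hc => h2 (by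
              rwa [add_assoc, one_add_one_eq_two, left_eq_add] at hc)),
            (show ∀ c : ZMod N, ¬(c + 1 + 1 = c) from fun c hc => h2 (by
              rwa [add_assoc, one_add_one_eq_two, add_eq_left] at hc))])
    all_goals try exact Or.inl (by ring)
    all_goals try ring


set_option maxHeartbeats 1000000 in
lemma pm_mMV2 (ε : ℝ) (h1 : (1:ZMod N) ≠ 0) (h2 : (2:ZMod N) ≠ 0) (x : Phase N) :
    PoissonMapAt (mMV2 ε) (JMV23 ε) (JMT23 ε) x := by
  intro i j
  rw [Jred ε h1]
  rcases i with a | a <;> rcases j with b | b <;>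
  · simp only [pd_mMV2_l, pd_mMV2_r]
    simp only [ite_idx_l1]
    simp only [ite_idx_l, ite_idx_r]
    simp only [mul_sub, Finset.sum_sub_distrib, sum_WPQ]
    by_cases e1 : a = b <;> by_cases e2 : a = b + 1 <;> by_cases e3 : b = a + 1 <;>
      first
        | exact (zc12 h1 e1 e2).elim
        | exact (zc13 h1 e1 e3).elim
        | exact (zc23 h2 e2 e3).elim
        | (simp [sub_eq_iff_eq_add, eq_sub_iff_add_eq, sub_left_inj,
            (show (a + 1 = b) ↔ (b = a + 1) from eq_comm),
            (show (b + 1 = a) ↔ (a = b + 1) from eq_comm),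
            (show (b = a) ↔ (a = b) from eq_comm),
            e1, e2, e3, h1, h2, JMT23, mMV2, wA, wB, c1, c2,
            left_eq_add, add_eq_left, right_eq_add,
            add_eq_right,
            add_sub_cancel_right, sub_add_cancel,
            (show ∀ c : ZMod N, ¬(c = 2 + c) from
              fun c hc => h2 (right_eq_add.mp hc)),
            (show ∀ c : ZMod N, ¬(2 + c = c) from
              fun c hc => h2 (add_eq_right.mp hc)),
            (show ∀ c : ZMod N, ¬(c = c + 1 + 1) from fun c hc => h2 (by
              rwa [add_assoc, one_add_one_eq_two, left_eq_add] at hc)),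
            (show ∀ c : ZMod N, ¬(c + 1 + 1 = c) from fun c hc => h2 (by
              rwa [add_assoc, one_add_one_eq_two, add_eq_left] at hc))])
    all_goals try exact Or.inl (by ring)
    all_goals try ring

end Aux

/-- (a) the pull-back of the Volterra flow under `𝐌₁(ε), 𝐌₂(ε)`
coincides with `MVL(ε)`, and these maps are Poisson from `{·,·}₂₃` to
`{·,·}₂ + ε{·,·}₃`; (b) the pull-back of `MTL(ε)` under `M₁(ε), M₂(ε)` coincides
with `MVL(ε)`, and these maps are Poisson for the corresponding `{·,·}₂₃`. -/
theorem stmt14 (N : ℕ) [NeZero N] (hN : 5 ≤ N) (ε : ℝ) :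
    (∀ x : Phase N, PullbackAt (bMV1 ε) (mvlF ε) vlF x) ∧
    (∀ x : Phase N, PullbackAt (bMV2 ε) (mvlF ε) vlF x) ∧
    (∀ x : Phase N, PoissonMapAt (bMV1 ε) (JMV23 ε)
      (fun y i j => JV2 y i j + ε * JV3 y i j) x) ∧
    (∀ x : Phase N, PoissonMapAt (bMV2 ε) (JMV23 ε)
      (fun y i j => JV2 y i j + ε * JV3 y i j) x) ∧
    (∀ x : Phase N, PullbackAt (mMV1 ε) (mvlF ε) (mtlF ε) x) ∧
    (∀ x : Phase N, PullbackAt (mMV2 ε) (mvlF ε) (mtlF ε) x) ∧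
    (∀ x : Phase N, PoissonMapAt (mMV1 ε) (JMV23 ε) (JMT23 ε) x) ∧
    (∀ x : Phase N, PoissonMapAt (mMV2 ε) (JMV23 ε) (JMT23 ε) x) := by
  have h1 : (1:ZMod N) ≠ 0 := by
    have h : ((1:ℕ):ZMod N) ≠ 0 := by
      rw [Ne, ZMod.natCast_eq_zero_iff]
      intro h
      exact absurd (Nat.le_of_dvd one_pos h) (by omega)
    simpa using h
  have h2 : (2:ZMod N) ≠ 0 := by
    have h : ((2:ℕ):ZMod N) ≠ 0 := by
      rw [Ne, ZMod.natCast_eq_zero_iff]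
      intro h
      exact absurd (Nat.le_of_dvd two_pos h) (by omega)
    simpa using h
  exact ⟨fun x => pb_bMV1 ε x, fun x => pb_bMV2 ε x,
    fun x => pm_bMV1 ε h1 h2 x, fun x => pm_bMV2 ε h1 h2 x,
    fun x => pb_mMV1 ε x, fun x => pb_mMV2 ε x,
    fun x => pm_mMV1 ε h1 h2 x, fun x => pm_mMV2 ε h1 h2 x⟩
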